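/- Fubini theorem: let 𝓘 be a lower integral on A and 𝓙 a lower integral on B, and suppose A × B carries the product topology, i.e. 𝒪(A × B) is the least subset of functions A × B → 𝕊 containing all rectangles U × V (U ∈ 𝒪(A), V ∈ 𝒪(B)) and closed under enumerable joins. Then the two iterated integrals on A × B agree: for every f : A × B → ℝ_l⁺, 𝓘(a ↦ 𝓙(b ↦ f(a,b))) = 𝓙(b ↦ 𝓘(a ↦ f(a,b))). -/

import Mathlib

/-- The initial σ-frame `𝕊`, as the least subset of the propositions `Ω = Prop`
containing `False` and `True` and closed under joins of increasing ω-chains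
(equivalently, the image of the free ω-cpo completion of `𝔹 = {⊥ ≤ ⊤}` in `Ω`). -/
inductive InS : Prop → Prop
  | bot : InS False
  | top : InS True
  | sup (c : ℕ → Prop) (mono : ∀ n, c n → c (n + 1)) (h : ∀ n, InS (c n)) :
      InS (∃ n, c n)

theorem InS.of_decidable (p : Prop) [Decidable p] : InS p := by
  by_cases h : p
  · rw [eq_true h]; exact InS.top
  · rw [eq_false h]; exact InS.bot

/-- A map between preorders is ω-(Scott-)continuous if it is monotone and preserves
least upper bounds of enumerable directed subsets. -/
def OmegaContinuous {C D : Type} [Preorder C] [Preorder D] (f : C → D) : Prop :=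
  Monotone f ∧
    ∀ (U : Set C) (x : C), U.Countable → U.Nonempty → DirectedOn (· ≤ ·) U →
      IsLUB U x → IsLUB (f '' U) (f x)

/-- A preorder is an ω-cpo if every enumerable directed subset has a least upper bound. -/
def IsOmegaCPO (C : Type) [Preorder C] : Prop :=
  ∀ U : Set C, U.Countable → U.Nonempty → DirectedOn (· ≤ ·) U → ∃ x, IsLUB U x

/-- A cover-preserving monotone map from an ω-cpo presentation `(P, Cov)` into an
ordered set: the image of each cover has a least upper bound above the image of the
covered element. -/
def CovMorphism {P C : Type} [Preorder P] [Preorder C]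
    (Cov : P → Set P → Prop) (f : P → C) : Prop :=
  Monotone f ∧ ∀ p U, Cov p U → ∃ s, IsLUB (f '' U) s ∧ f p ≤ s

/-- `(Pω, η)` is the free ω-cpo completion of the ω-cpo presentation `(P, Cov)`:
`Pω` is an ω-cpo, `η` is a cover-preserving monotone map, and every cover-preserving
monotone map from `P` into an ω-cpo extends uniquely to an ω-continuous map on `Pω`. -/
structure IsFreeOmegaCompletion {P : Type} [Preorder P] (Cov : P → Set P → Prop)
    (Pω : Type) [PartialOrder Pω] (η : P → Pω) : Prop where
  cpo : IsOmegaCPO Pω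
  eta_morph : CovMorphism Cov η
  extend_unique : ∀ (C : Type) [PartialOrder C], IsOmegaCPO C →
    ∀ f : P → C, CovMorphism Cov f →
      ∃! g : Pω → C, OmegaContinuous g ∧ ∀ p, g (η p) = f p

/-- The Sierpinski space as a subtype of the propositions, ordered by implication. -/
abbrev Sierp := {p : Prop // InS p}

theorem InS.or {p q : Prop} (hp : InS p) (hq : InS q) : InS (p ∨ q) := by
  induction hp with
  | bot => simp only [false_or]; exact hq
  | top => simp only [true_or]; exact InS.top
  | sup c mono h ih =>
      have e : ((∃ n, c n) ∨ q) = (∃ n, c n ∨ q) := propext <| by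
        constructor
        · rintro (⟨n, hn⟩ | hq')
          · exact ⟨n, Or.inl hn⟩
          · exact ⟨0, Or.inr hq'⟩
        · rintro ⟨n, hn | hq'⟩
          · exact Or.inl ⟨n, hn⟩
          · exact Or.inr hq'
      rw [e]
      exact InS.sup _ (fun n => Or.imp_left (mono n)) ih

theorem InS.and {p q : Prop} (hp : InS p) (hq : InS q) : InS (p ∧ q) := by
  induction hp with
  | bot => simp only [false_and]; exact InS.bot
  | top => simp only [true_and]; exact hq
  | sup c mono h ih =>
      have e : ((∃ n, c n) ∧ q) = (∃ n, c n ∧ q) := propext <| by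
        constructor
        · rintro ⟨⟨n, hn⟩, hq'⟩
          exact ⟨n, hn, hq'⟩
        · rintro ⟨n, hn, hq'⟩
          exact ⟨⟨n, hn⟩, hq'⟩
      rw [e]
      exact InS.sup _ (fun n => And.imp_left (mono n)) ih

theorem InS.exists_nat (p : ℕ → Prop) (h : ∀ n, InS (p n)) : InS (∃ n, p n) := by
  have key : ∀ m, InS (∃ k, k ≤ m ∧ p k) := by
    intro m
    induction m with
    | zero =>
        have e : (∃ k, k ≤ 0 ∧ p k) = p 0 := propext <| by
          constructor
          · rintro ⟨k, hk, hp⟩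
            rwa [Nat.le_zero.mp hk] at hp
          · exact fun hp => ⟨0, le_refl _, hp⟩
        rw [e]; exact h 0
    | succ m ih =>
        have e : (∃ k, k ≤ m + 1 ∧ p k) = ((∃ k, k ≤ m ∧ p k) ∨ p (m + 1)) :=
          propext <| by
            constructor
            · rintro ⟨k, hk, hp⟩
              rcases Nat.eq_or_lt_of_le hk with rfl | hk'
              · exact Or.inr hp
              · exact Or.inl ⟨k, Nat.lt_succ_iff.mp hk', hp⟩
            · rintro (⟨k, hk, hp⟩ | hp)
              · exact ⟨k, hk.trans (Nat.le_succ m), hp⟩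
              · exact ⟨m + 1, le_refl _, hp⟩
        rw [e]; exact ih.or (h (m + 1))
  have e : (∃ n, p n) = (∃ m, ∃ k, k ≤ m ∧ p k) := propext <| by
    constructor
    · rintro ⟨n, hn⟩
      exact ⟨n, n, le_refl _, hn⟩
    · rintro ⟨m, k, _, hk⟩
      exact ⟨k, hk⟩
  rw [e]
  exact InS.sup _ (fun m ⟨k, hk, hp⟩ => ⟨k, hk.trans (Nat.le_succ m), hp⟩) key

def Sierp.botS : Sierp := ⟨False, InS.bot⟩
def Sierp.topS : Sierp := ⟨True, InS.top⟩
def Sierp.or (s t : Sierp) : Sierp := ⟨s.1 ∨ t.1, s.2.or t.2⟩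
def Sierp.and (s t : Sierp) : Sierp := ⟨s.1 ∧ t.1, s.2.and t.2⟩

/-- Enumerable joins in the Sierpinski space. -/
def Sierp.joinSeq (s : ℕ → Sierp) : Sierp :=
  ⟨∃ n, (s n).1, InS.exists_nat _ (fun n => (s n).2)⟩

/-- A lower real: an `𝕊`-valued, inhabited, rounded, downward-closed cut of rationals. -/
structure LowerReal where
  cut : ℚ → Prop
  inS : ∀ q, InS (cut q)
  inhab : ∃ q, cut q
  rounded : ∀ q, cut q → ∃ q', q < q' ∧ cut q'
  lower : ∀ q q', q < q' → cut q' → cut q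

instance : Preorder LowerReal where
  le L₁ L₂ := ∀ q, L₁.cut q → L₂.cut q
  le_refl _ _ h := h
  le_trans _ _ _ h₁ h₂ q hq := h₂ q (h₁ q hq)

/-- The lower real associated to a rational number. -/
def ratLR (q : ℚ) : LowerReal where
  cut p := p < q
  inS _ := InS.of_decidable _
  inhab := ⟨q - 1, by linarith⟩
  rounded p hp := ⟨(p + q) / 2, by constructor <;> linarith⟩
  lower _ _ h h' := lt_trans h h'

/-- The non-negative rationals. -/
abbrev QPlus := {q : ℚ // 0 ≤ q}

/-- The non-negative lower reals `ℝ_l⁺`. -/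
abbrev NNLowerReal := {L : LowerReal // ∀ q : ℚ, q < 0 → L.cut q}

/-- The non-negative lower real associated to a non-negative rational. -/
def ratNN (q : QPlus) : NNLowerReal :=
  ⟨ratLR q.1, fun _ hp => lt_of_lt_of_le hp q.2⟩

def zeroNN : NNLowerReal := ratNN ⟨0, le_refl 0⟩
def oneNN : NNLowerReal := ratNN ⟨1, by norm_num⟩

/-- `r : 𝕊 → ℝ_l⁺`, the unique ω-continuous map with `r ⊥ = 0` and `r ⊤ = 1`;
`indicatorLR (U a)` is the real indicator function `𝟙_U` of an open `U`. -/
def indicatorLR (s : Sierp) : NNLowerReal :=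
  ⟨{ cut := fun q => q < 0 ∨ (s.1 ∧ q < 1)
     inS := fun q => by
       show InS (q < 0 ∨ (s.1 ∧ q < 1))
       by_cases h0 : q < 0
       · rw [eq_true (Or.inl h0 : q < 0 ∨ (s.1 ∧ q < 1))]; exact InS.top
       · rw [eq_false h0, false_or]
         by_cases h1 : q < 1
         · rw [eq_true h1, and_true]; exact s.2
         · rw [eq_false h1, and_false]; exact InS.bot
     inhab := ⟨-1, Or.inl (by norm_num)⟩
     rounded := fun q hq => by
       rcases hq with h | ⟨hs, h1⟩
       · exact ⟨q / 2, by linarith, Or.inl (by linarith)⟩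
       · exact ⟨(q + 1) / 2, by
           constructor
           · linarith
           · exact Or.inr ⟨hs, by linarith⟩⟩
     lower := fun q q' h hq' => by
       rcases hq' with h' | ⟨hs, h1⟩
       · exact Or.inl (lt_trans h h')
       · by_cases h0 : q < 0
         · exact Or.inl h0
         · exact Or.inr ⟨hs, lt_trans h h1⟩ },
   fun q hq => Or.inl hq⟩

/-- Specification of the addition on the non-negative lower reals: ω-continuous in
each argument and extending addition of non-negative rationals. -/
def AddSpecNN (add : NNLowerReal → NNLowerReal → NNLowerReal) : Prop :=
  (∀ L, OmegaContinuous (add L)) ∧ (∀ L, OmegaContinuous (fun x => add x L)) ∧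
    ∀ q q' : QPlus, add (ratNN q) (ratNN q') = ratNN ⟨q.1 + q'.1, add_nonneg q.2 q'.2⟩

/-- Specification of the multiplication on the non-negative lower reals: ω-continuous
in each argument and extending multiplication of non-negative rationals. -/
def MulSpecNN (mul : NNLowerReal → NNLowerReal → NNLowerReal) : Prop :=
  (∀ L, OmegaContinuous (mul L)) ∧ (∀ L, OmegaContinuous (fun x => mul x L)) ∧
    ∀ q q' : QPlus, mul (ratNN q) (ratNN q') = ratNN ⟨q.1 * q'.1, mul_nonneg q.2 q'.2⟩

/-- A lower integral on `A`: an ω-continuous, bottom-preserving, additive map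
`(A → ℝ_l⁺) → ℝ_l⁺`. -/
def IsLowerIntegral {A : Type} (add : NNLowerReal → NNLowerReal → NNLowerReal)
    (I : (A → NNLowerReal) → NNLowerReal) : Prop :=
  OmegaContinuous I ∧ I (fun _ => zeroNN) = zeroNN ∧
    ∀ f g : A → NNLowerReal, I (fun a => add (f a) (g a)) = add (I f) (I g)

/-- A valuation on `A`: an ω-continuous, bottom-preserving, modular map
`𝒪(A) = (A → 𝕊) → ℝ_l⁺`. -/
def IsValuation {A : Type} (add : NNLowerReal → NNLowerReal → NNLowerReal)
    (μ : (A → Sierp) → NNLowerReal) : Prop :=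
  OmegaContinuous μ ∧ μ (fun _ => Sierp.botS) = zeroNN ∧
    ∀ U V : A → Sierp,
      add (μ U) (μ V) =
        add (μ (fun a => (U a).or (V a))) (μ (fun a => (U a).and (V a)))

/-- The open rectangle `U × V` in `A × B`. -/
def rectangle {A B : Type} (U : A → Sierp) (V : B → Sierp) : A × B → Sierp :=
  fun ab => (U ab.1).and (V ab.2)

namespace Fub

noncomputable section
open Classical
open scoped ENNReal

theorem InS.all (p : Prop) : InS p := @InS.of_decidable p (Classical.propDecidable p)

abbrev cutN (x : NNLowerReal) (q : ℚ) : Prop := x.1.cut q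

theorem nn_le_iff {x y : NNLowerReal} : x ≤ y ↔ ∀ q, cutN x q → cutN y q := Iff.rfl

theorem nn_ext {x y : NNLowerReal} (h : ∀ q, cutN x q ↔ cutN y q) : x = y := by
  apply Subtype.ext
  obtain ⟨⟨c1, h1, h2, h3, h4⟩, hx⟩ := x
  obtain ⟨⟨c2, g1, g2, g3, g4⟩, hy⟩ := y
  simp only [LowerReal.mk.injEq]
  funext q; exact propext (h q)

theorem nn_le_antisymm {x y : NNLowerReal} (h : x ≤ y) (h' : y ≤ x) : x = y :=
  nn_ext fun q => ⟨h q, h' q⟩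

def mkNN (S : ℚ → Prop) (hneg : ∀ q, q < 0 → S q)
    (hround : ∀ q, S q → ∃ q', q < q' ∧ S q')
    (hlow : ∀ q q', q < q' → S q' → S q) : NNLowerReal :=
  ⟨⟨S, fun _ => InS.all _, ⟨-1, hneg _ (by norm_num)⟩, hround, hlow⟩, hneg⟩

theorem cut_mkNN {S hneg hround hlow q} : cutN (mkNN S hneg hround hlow) q ↔ S q := Iff.rfl

/-- ENNReal-to-NNLowerReal. -/
def ofE (y : ℝ≥0∞) : NNLowerReal :=
  mkNN (fun q => q < 0 ∨ ENNReal.ofReal q < y) (fun q h => Or.inl h)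
    (by
      intro q hq
      rcases hq with hq | hq
      · exact ⟨q / 2, by linarith, Or.inl (by linarith)⟩
      · obtain ⟨r, hr0, h1, h2⟩ := ENNReal.lt_iff_exists_rat_btwn.mp hq
        refine ⟨r, ?_, Or.inr ?_⟩
        · by_contra hc
          push_neg at hc
          have : ENNReal.ofReal r ≤ ENNReal.ofReal q :=
            ENNReal.ofReal_le_ofReal (by exact_mod_cast hc)
          exact absurd h1 (not_lt.mpr (le_trans this (le_of_eq rfl)))
        · exact_mod_cast h2)
    (by
      intro q q' h hq'
      rcases hq' with h' | h'
      · exact Or.inl (lt_trans h h')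
      · exact Or.inr (lt_of_le_of_lt (ENNReal.ofReal_le_ofReal (by exact_mod_cast h.le)) h'))

theorem cut_ofE {y q} : cutN (ofE y) q ↔ q < 0 ∨ ENNReal.ofReal q < y := Iff.rfl

/-- NNLowerReal-to-ENNReal. -/
def toE (x : NNLowerReal) : ℝ≥0∞ := ⨆ q ∈ {q : ℚ | cutN x q}, ENNReal.ofReal q

theorem le_toE {x : NNLowerReal} {q : ℚ} (h : cutN x q) : ENNReal.ofReal q ≤ toE x :=
  le_iSup₂_of_le q h le_rfl

theorem lt_toE_iff {x : NNLowerReal} {z : ℝ≥0∞} :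
    z < toE x ↔ ∃ q, cutN x q ∧ z < ENNReal.ofReal q := by
  simp only [toE, lt_iSup_iff, Set.mem_setOf_eq]
  exact ⟨fun ⟨q, hq, h⟩ => ⟨q, hq, h⟩, fun ⟨q, hq, h⟩ => ⟨q, hq, h⟩⟩

theorem toE_le {x y : NNLowerReal} (h : x ≤ y) : toE x ≤ toE y :=
  iSup₂_le fun q hq => le_toE (h q hq)

theorem ofE_mono {y z : ℝ≥0∞} (h : y ≤ z) : ofE y ≤ ofE z := by
  intro q hq
  rcases hq with h' | h'
  · exact Or.inl h'
  · exact Or.inr (lt_of_lt_of_le h' h)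

theorem rat_lt_of_ofReal_lt {q r : ℚ} (h : ENNReal.ofReal q < ENNReal.ofReal r) : q < r := by
  by_contra hc
  push_neg at hc
  exact absurd h (not_lt.mpr (ENNReal.ofReal_le_ofReal (by exact_mod_cast hc)))

theorem ofReal_lt_ofReal_rat {q r : ℚ} (h0 : 0 ≤ q) (h : q < r) :
    ENNReal.ofReal q < ENNReal.ofReal r := by
  rw [ENNReal.ofReal_lt_ofReal_iff_of_nonneg (by exact_mod_cast h0)]
  exact_mod_cast h

theorem ofE_toE (x : NNLowerReal) : ofE (toE x) = x := by
  apply nn_ext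
  intro q
  rw [cut_ofE]
  constructor
  · rintro (h | h)
    · exact x.2 q h
    · obtain ⟨q', hq', hlt⟩ := lt_toE_iff.mp h
      exact x.1.lower q q' (rat_lt_of_ofReal_lt hlt) hq'
  · intro h
    by_cases h0 : q < 0
    · exact Or.inl h0
    · push_neg at h0
      obtain ⟨q', hlt, hq'⟩ := x.1.rounded q h
      exact Or.inr (lt_of_lt_of_le (ofReal_lt_ofReal_rat h0 hlt) (le_toE hq'))

theorem toE_ofE (y : ℝ≥0∞) : toE (ofE y) = y := by
  apply le_antisymm
  · refine iSup₂_le fun q hq => ?_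
    rcases hq with h | h
    · calc ENNReal.ofReal q = 0 := by
            rw [ENNReal.ofReal_eq_zero]; exact_mod_cast h.le
        _ ≤ y := zero_le
    · exact h.le
  · by_contra hc
    push_neg at hc
    obtain ⟨r, hr0, h1, h2⟩ := ENNReal.lt_iff_exists_rat_btwn.mp hc
    have hcut : cutN (ofE y) r := Or.inr (by exact_mod_cast h2)
    exact absurd (le_toE hcut) (not_le.mpr h1)

theorem nn_le_iff_toE {x y : NNLowerReal} : x ≤ y ↔ toE x ≤ toE y := by
  constructor
  · exact toE_le
  · intro h
    have := ofE_mono h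
    rwa [ofE_toE, ofE_toE] at this

theorem toE_inj {x y : NNLowerReal} (h : toE x = toE y) : x = y := by
  rw [← ofE_toE x, ← ofE_toE y, h]

theorem isLUB_iff_toE {S : Set NNLowerReal} {x : NNLowerReal} :
    IsLUB S x ↔ toE x = ⨆ s ∈ S, toE s := by
  constructor
  · intro h
    apply le_antisymm
    · have hub : ∀ s ∈ S, s ≤ ofE (⨆ s ∈ S, toE s) := by
        intro s hs
        rw [nn_le_iff_toE, toE_ofE]
        exact le_iSup₂_of_le s hs le_rfl
      have := h.2 hub
      calc toE x ≤ toE (ofE (⨆ s ∈ S, toE s)) := toE_le this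
        _ = _ := toE_ofE _
    · exact iSup₂_le fun s hs => toE_le (h.1 hs)
  · intro h
    constructor
    · intro s hs
      rw [nn_le_iff_toE, h]
      exact le_iSup₂_of_le s hs le_rfl
    · intro b hb
      rw [nn_le_iff_toE, h]
      exact iSup₂_le fun s hs => toE_le (hb hs)

end
end Fub
namespace Fub
noncomputable section
open Classical
open scoped ENNReal

/-- rational clipped to be non-negative, as an NNLowerReal -/
def ratClip (q : ℚ) : NNLowerReal := ratNN ⟨max q 0, le_max_right _ _⟩

theorem cut_ratNN {c : QPlus} {q : ℚ} : cutN (ratNN c) q ↔ q < c.1 := Iff.rfl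

theorem ofReal_max (q : ℚ) : ENNReal.ofReal (max q 0 : ℚ) = ENNReal.ofReal q := by
  rcases le_total q 0 with h | h
  · rw [max_eq_right h]
    have h1 : ENNReal.ofReal ((0:ℚ):ℝ) = 0 := by simp
    have h2 : ENNReal.ofReal q = 0 := by
      rw [ENNReal.ofReal_eq_zero]; exact_mod_cast h
    rw [h2]; exact_mod_cast h1
  · rw [max_eq_left h]

theorem toE_ratNN (c : QPlus) : toE (ratNN c) = ENNReal.ofReal c.1 := by
  apply le_antisymm
  · exact iSup₂_le fun q hq => ENNReal.ofReal_le_ofReal (by exact_mod_cast (le_of_lt hq))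
  · by_contra hc
    push_neg at hc
    obtain ⟨r, hr0, h1, h2⟩ := ENNReal.lt_iff_exists_rat_btwn.mp hc
    have hrc : r < c.1 := rat_lt_of_ofReal_lt (by exact_mod_cast h2)
    exact absurd (le_toE (x := ratNN c) hrc) (not_le.mpr h1)

theorem toE_ratClip (q : ℚ) : toE (ratClip q) = ENNReal.ofReal q := by
  rw [ratClip, toE_ratNN, ofReal_max]

theorem ratClip_mono {q q' : ℚ} (h : q ≤ q') : ratClip q ≤ ratClip q' := by
  intro p hp
  have hp' : p < max q 0 := hp
  show p < max q' 0
  exact lt_of_lt_of_le hp' (max_le_max_right _ h)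

theorem cut_max {x : NNLowerReal} {q q' : ℚ} (h : cutN x q) (h' : cutN x q') :
    cutN x (max q q') := by
  rcases le_total q q' with hle | hle
  · rwa [max_eq_right hle]
  · rwa [max_eq_left hle]

theorem isLUB_ratClip (x : NNLowerReal) : IsLUB (ratClip '' {q | cutN x q}) x := by
  rw [isLUB_iff_toE]
  rw [iSup_image]
  simp only [toE_ratClip]
  rfl

theorem zeroNN_eq_ofE : zeroNN = ofE 0 := by
  apply nn_ext
  intro q
  rw [cut_ofE]
  constructor
  · intro h; exact Or.inl h
  · rintro (h | h)
    · exact h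
    · exact absurd h (by simp)

theorem toE_zeroNN : toE zeroNN = 0 := by rw [zeroNN_eq_ofE, toE_ofE]

theorem ofE_ofReal_rat (c : QPlus) : ofE (ENNReal.ofReal c.1) = ratNN c := by
  apply nn_ext
  intro q
  rw [cut_ofE, cut_ratNN]
  constructor
  · rintro (h | h)
    · exact lt_of_lt_of_le h c.2
    · exact rat_lt_of_ofReal_lt h
  · intro h
    by_cases h0 : q < 0
    · exact Or.inl h0
    · push_neg at h0
      exact Or.inr (ofReal_lt_ofReal_rat h0 h)

/-- Extensionality for ω-continuous maps out of NNLowerReal via rational density. -/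
theorem cont_ext {F G : NNLowerReal → NNLowerReal}
    (hF : OmegaContinuous F) (hG : OmegaContinuous G)
    (h : ∀ q : ℚ, F (ratClip q) = G (ratClip q)) (x : NNLowerReal) : F x = G x := by
  have hS := isLUB_ratClip x
  have hcnt : (ratClip '' {q | cutN x q}).Countable := (Set.to_countable _).image _
  have hne : (ratClip '' {q | cutN x q}).Nonempty := by
    obtain ⟨q, hq⟩ := x.1.inhab
    exact ⟨ratClip q, ⟨q, hq, rfl⟩⟩
  have hdir : DirectedOn (· ≤ ·) (ratClip '' {q | cutN x q}) := by
    rintro a ⟨q1, h1, rfl⟩ b ⟨q2, h2, rfl⟩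
    exact ⟨ratClip (max q1 q2), ⟨max q1 q2, cut_max h1 h2, rfl⟩,
      ratClip_mono (le_max_left _ _), ratClip_mono (le_max_right _ _)⟩
  have h1 := hF.2 _ x hcnt hne hdir hS
  have h2 := hG.2 _ x hcnt hne hdir hS
  have himg : F '' (ratClip '' {q | cutN x q}) = G '' (ratClip '' {q | cutN x q}) := by
    rw [Set.image_image, Set.image_image]
    exact Set.image_congr fun q _ => h q
  rw [himg] at h1
  exact nn_le_antisymm (h1.2 h2.1) (h2.2 h1.1)

/-- Building ω-continuous maps from ENNReal-sup-preserving maps. -/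
theorem omega_ofE_comp {φ : ℝ≥0∞ → ℝ≥0∞} (hmono : Monotone φ)
    (hsup : ∀ S : Set NNLowerReal, S.Nonempty → φ (⨆ s ∈ S, toE s) = ⨆ s ∈ S, φ (toE s)) :
    OmegaContinuous (fun x => ofE (φ (toE x))) := by
  constructor
  · intro x y h
    exact ofE_mono (hmono (toE_le h))
  · intro U x hcnt hne hdir hx
    rw [isLUB_iff_toE] at hx ⊢
    rw [toE_ofE, hx, hsup U hne, iSup_image]
    exact iSup_congr fun s => iSup_congr fun _ => (toE_ofE _).symm

theorem biSup_add_const {S : Set NNLowerReal} (hne : S.Nonempty) (c : ℝ≥0∞) :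
    (⨆ s ∈ S, toE s) + c = ⨆ s ∈ S, (toE s + c) := by
  haveI : Nonempty S := hne.to_subtype
  rw [iSup_subtype', iSup_subtype', ENNReal.iSup_add]

theorem const_add_biSup {S : Set NNLowerReal} (hne : S.Nonempty) (c : ℝ≥0∞) :
    c + (⨆ s ∈ S, toE s) = ⨆ s ∈ S, (c + toE s) := by
  haveI : Nonempty S := hne.to_subtype
  rw [iSup_subtype', iSup_subtype', ENNReal.add_iSup]

theorem add_eq_ofE {add : NNLowerReal → NNLowerReal → NNLowerReal} (hadd : AddSpecNN add)
    (x y : NNLowerReal) : add x y = ofE (toE x + toE y) := by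
  -- base case on pairs of rationals
  have base : ∀ q p : ℚ, add (ratClip q) (ratClip p)
      = ofE (toE (ratClip q) + toE (ratClip p)) := by
    intro q p
    rw [ratClip, ratClip, hadd.2.2, toE_ratNN, toE_ratNN]
    have : ENNReal.ofReal (max q 0 : ℚ) + ENNReal.ofReal (max p 0 : ℚ)
        = ENNReal.ofReal ((max q 0 + max p 0 : ℚ) : ℝ) := by
      rw [← ENNReal.ofReal_add (by exact_mod_cast le_max_right q 0)
        (by exact_mod_cast le_max_right p 0)]
      norm_cast
    rw [this]
    exact (ofE_ofReal_rat ⟨max q 0 + max p 0, _⟩).symm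
  -- continuity in second argument
  have step1 : ∀ q : ℚ, ∀ y, add (ratClip q) y = ofE (toE (ratClip q) + toE y) := by
    intro q
    have hG : OmegaContinuous (fun y => ofE (toE (ratClip q) + toE y)) :=
      omega_ofE_comp (fun a b h => add_le_add_right h _)
        (fun S hne => const_add_biSup hne _)
    exact cont_ext (hadd.1 _) hG (fun p => base q p)
  -- continuity in first argument
  have hG : OmegaContinuous (fun x => ofE (toE x + toE y)) :=
    omega_ofE_comp (fun a b h => add_le_add_left h _)
      (fun S hne => biSup_add_const hne _)
  exact cont_ext (hadd.2.1 y) hG (fun q => step1 q y) x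

theorem toE_add {add : NNLowerReal → NNLowerReal → NNLowerReal} (hadd : AddSpecNN add)
    (x y : NNLowerReal) : toE (add x y) = toE x + toE y := by
  rw [add_eq_ofE hadd, toE_ofE]

end
end Fub
namespace Fub
noncomputable section
open Classical
open scoped ENNReal

variable {X : Type}

/-- pointwise LUBs give LUBs in the function space -/
theorem isLUB_pi {u : ℕ → X → NNLowerReal} {g : X → NNLowerReal}
    (h : ∀ a, IsLUB (Set.range fun n => u n a) (g a)) : IsLUB (Set.range u) g := by
  constructor
  · rintro _ ⟨n, rfl⟩
    intro a
    exact (h a).1 ⟨n, rfl⟩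
  · intro b hb
    intro a
    refine (h a).2 ?_
    rintro _ ⟨n, rfl⟩
    exact hb ⟨n, rfl⟩ a

/-- The integral transferred to ENNReal-valued functions. -/
def hatI (I : (X → NNLowerReal) → NNLowerReal) (h : X → ℝ≥0∞) : ℝ≥0∞ :=
  toE (I fun a => ofE (h a))

variable {add : NNLowerReal → NNLowerReal → NNLowerReal}
variable {I : (X → NNLowerReal) → NNLowerReal}

theorem hatI_mono (hI : IsLowerIntegral add I) :
    ∀ {h h' : X → ℝ≥0∞}, (∀ a, h a ≤ h' a) → hatI I h ≤ hatI I h' := by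
  intro h h' hh
  exact toE_le (hI.1.1 fun a => ofE_mono (hh a))

theorem hatI_zero (hI : IsLowerIntegral add I) : hatI I (fun _ => 0) = 0 := by
  unfold hatI
  have : (fun _ : X => ofE 0) = (fun _ : X => zeroNN) := by
    funext a; rw [zeroNN_eq_ofE]
  rw [this, hI.2.1, toE_zeroNN]

theorem hatI_add (hadd : AddSpecNN add) (hI : IsLowerIntegral add I) (h1 h2 : X → ℝ≥0∞) :
    hatI I (fun a => h1 a + h2 a) = hatI I h1 + hatI I h2 := by
  unfold hatI
  have : (fun a => ofE (h1 a + h2 a)) = fun a => add (ofE (h1 a)) (ofE (h2 a)) := by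
    funext a
    rw [add_eq_ofE hadd, toE_ofE, toE_ofE]
  rw [this, hI.2.2, toE_add hadd]

theorem hatI_iSup (hI : IsLowerIntegral add I) (u : ℕ → X → ℝ≥0∞)
    (hu : ∀ n a, u n a ≤ u (n + 1) a) :
    hatI I (fun a => ⨆ n, u n a) = ⨆ n, hatI I (u n) := by
  set v : ℕ → X → NNLowerReal := fun n a => ofE (u n a) with hv
  have humono : ∀ {n m}, n ≤ m → ∀ a, u n a ≤ u m a := by
    intro n m hnm
    induction hnm with
    | refl => exact fun a => le_rfl
    | step _ ih => exact fun a => le_trans (ih a) (hu _ a)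
  set g : X → NNLowerReal := fun a => ofE (⨆ n, u n a) with hg
  have hlub : IsLUB (Set.range v) g := by
    apply isLUB_pi
    intro a
    rw [isLUB_iff_toE]
    rw [toE_ofE, iSup_range]
    exact iSup_congr fun n => (toE_ofE _).symm
  have hdir : DirectedOn (· ≤ ·) (Set.range v) := by
    rintro _ ⟨n, rfl⟩ _ ⟨m, rfl⟩
    exact ⟨v (max n m), ⟨max n m, rfl⟩,
      fun a => ofE_mono (humono (le_max_left n m) a),
      fun a => ofE_mono (humono (le_max_right n m) a)⟩
  have := hI.1.2 (Set.range v) g (Set.countable_range v) (Set.range_nonempty v) hdir hlub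
  rw [← Set.range_comp] at this
  rw [isLUB_iff_toE] at this
  unfold hatI
  rw [show (fun a => ofE (⨆ n, u n a)) = g from rfl, this, iSup_range]
  rfl

theorem hatI_congr {h h' : X → ℝ≥0∞} (hh : ∀ a, h a = h' a) : hatI I h = hatI I h' := by
  unfold hatI
  have : (fun a => ofE (h a)) = fun a => ofE (h' a) := funext fun a => by rw [hh a]
  rw [this]

theorem hatI_natmul (hadd : AddSpecNN add) (hI : IsLowerIntegral add I) (n : ℕ)
    (h : X → ℝ≥0∞) : hatI I (fun a => (n : ℝ≥0∞) * h a) = (n : ℝ≥0∞) * hatI I h := by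
  induction n with
  | zero =>
      simp only [Nat.cast_zero, zero_mul]
      exact hatI_zero hI
  | succ n ih =>
      have : (fun a => ((n + 1 : ℕ) : ℝ≥0∞) * h a)
          = fun a => (n : ℝ≥0∞) * h a + h a := by
        funext a
        push_cast
        ring
      rw [hatI_congr (fun a => congrFun this a), hatI_add hadd hI, ih]
      push_cast
      ring

theorem hatI_invpow (hadd : AddSpecNN add) (hI : IsLowerIntegral add I) (k : ℕ)
    (h : X → ℝ≥0∞) :
    hatI I (fun a => (2 ^ k : ℝ≥0∞)⁻¹ * h a) = (2 ^ k : ℝ≥0∞)⁻¹ * hatI I h := by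
  have h2 : (2 ^ k : ℝ≥0∞) ≠ 0 := by positivity
  have h2' : (2 ^ k : ℝ≥0∞) ≠ ⊤ := by
    exact ENNReal.pow_ne_top (by norm_num)
  have cancel : ∀ z : ℝ≥0∞, (2 ^ k : ℝ≥0∞) * ((2 ^ k : ℝ≥0∞)⁻¹ * z) = z := by
    intro z
    rw [← mul_assoc, ENNReal.mul_inv_cancel h2 h2', one_mul]
  have key : (2 ^ k : ℝ≥0∞) * hatI I (fun a => (2 ^ k : ℝ≥0∞)⁻¹ * h a) = hatI I h := by
    have hc : ((2 ^ k : ℕ) : ℝ≥0∞) = (2 ^ k : ℝ≥0∞) := by push_cast; ring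
    rw [← hc, ← hatI_natmul hadd hI (2 ^ k)]
    apply hatI_congr
    intro a
    rw [hc, cancel]
  calc hatI I (fun a => (2 ^ k : ℝ≥0∞)⁻¹ * h a)
      = (2 ^ k : ℝ≥0∞)⁻¹ * ((2 ^ k : ℝ≥0∞) * hatI I (fun a => (2 ^ k : ℝ≥0∞)⁻¹ * h a)) := by
        rw [← mul_assoc, ENNReal.inv_mul_cancel h2 h2', one_mul]
    _ = (2 ^ k : ℝ≥0∞)⁻¹ * hatI I h := by rw [key]

theorem hatI_finsum (hadd : AddSpecNN add) (hI : IsLowerIntegral add I)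
    (K : ℕ) (h : ℕ → X → ℝ≥0∞) :
    hatI I (fun a => ∑ k ∈ Finset.range K, h k a)
      = ∑ k ∈ Finset.range K, hatI I (h k) := by
  induction K with
  | zero =>
      simp only [Finset.range_zero, Finset.sum_empty]
      exact hatI_zero hI
  | succ K ih =>
      have : (fun a => ∑ k ∈ Finset.range (K + 1), h k a)
          = fun a => (∑ k ∈ Finset.range K, h k a) + h K a := by
        funext a
        rw [Finset.sum_range_succ]
      rw [hatI_congr (fun a => congrFun this a), hatI_add hadd hI, ih,
        Finset.sum_range_succ]

end
end Fub
namespace Fub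
noncomputable section
open Classical
open scoped ENNReal

theorem pow2_ne_zero (n : ℕ) : (2 ^ n : ℝ≥0∞) ≠ 0 := by positivity
theorem pow2_ne_top (n : ℕ) : (2 ^ n : ℝ≥0∞) ≠ ⊤ := ENNReal.pow_ne_top (by norm_num)

/-- dyadic approximation numerator -/
def dyN (n : ℕ) (z : ℝ≥0∞) : ℕ :=
  if z = ⊤ then n * 2 ^ n else min ⌊z.toReal * 2 ^ n⌋₊ (n * 2 ^ n)

/-- dyadic approximation of an extended non-negative real -/
def dy (n : ℕ) (z : ℝ≥0∞) : ℝ≥0∞ := (dyN n z : ℝ≥0∞) * (2 ^ n : ℝ≥0∞)⁻¹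

theorem dyN_le_bound (n : ℕ) (z : ℝ≥0∞) : dyN n z ≤ n * 2 ^ n := by
  unfold dyN
  split
  · exact le_rfl
  · exact min_le_right _ _

theorem dyN_succ_ge (n : ℕ) (z : ℝ≥0∞) : 2 * dyN n z ≤ dyN (n + 1) z := by
  unfold dyN
  have hpow : (2 : ℕ) ^ (n + 1) = 2 ^ n * 2 := pow_succ 2 n
  split
  · -- z = ⊤
    calc 2 * (n * 2 ^ n) = n * 2 ^ (n + 1) := by ring
      _ ≤ (n + 1) * 2 ^ (n + 1) := Nat.mul_le_mul_right _ (Nat.le_succ n)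
  · rename_i hz
    have hr : 0 ≤ z.toReal := ENNReal.toReal_nonneg
    apply le_min
    · calc 2 * min ⌊z.toReal * 2 ^ n⌋₊ (n * 2 ^ n) ≤ 2 * ⌊z.toReal * 2 ^ n⌋₊ :=
            Nat.mul_le_mul_left 2 (min_le_left _ _)
        _ ≤ ⌊z.toReal * 2 ^ (n + 1)⌋₊ := by
            apply Nat.le_floor
            push_cast
            have h1 : (⌊z.toReal * 2 ^ n⌋₊ : ℝ) ≤ z.toReal * 2 ^ n :=
              Nat.floor_le (by positivity)
            have hps : (2:ℝ) ^ (n+1) = 2 ^ n * 2 := pow_succ 2 n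
            nlinarith
    · calc 2 * min ⌊z.toReal * 2 ^ n⌋₊ (n * 2 ^ n) ≤ 2 * (n * 2 ^ n) :=
            Nat.mul_le_mul_left 2 (min_le_right _ _)
        _ ≤ (n + 1) * 2 ^ (n + 1) := by
            calc 2 * (n * 2 ^ n) = n * 2 ^ (n + 1) := by ring
              _ ≤ (n + 1) * 2 ^ (n + 1) := Nat.mul_le_mul_right _ (Nat.le_succ n)

theorem two_mul_inv_pow_succ (n : ℕ) :
    (2 : ℝ≥0∞) * (2 ^ (n + 1) : ℝ≥0∞)⁻¹ = (2 ^ n : ℝ≥0∞)⁻¹ := by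
  rw [pow_succ, ENNReal.mul_inv (Or.inl (pow2_ne_zero n)) (Or.inl (pow2_ne_top n))]
  rw [← mul_comm ((2:ℝ≥0∞)⁻¹) _, ← mul_assoc, ENNReal.mul_inv_cancel (by norm_num) (by norm_num),
    one_mul]

theorem dy_mono (n : ℕ) (z : ℝ≥0∞) : dy n z ≤ dy (n + 1) z := by
  unfold dy
  have key : (dyN n z : ℝ≥0∞) * (2 ^ n : ℝ≥0∞)⁻¹
      = ((2 * dyN n z : ℕ) : ℝ≥0∞) * (2 ^ (n + 1) : ℝ≥0∞)⁻¹ := by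
    push_cast
    rw [← two_mul_inv_pow_succ n]
    ring
  rw [key]
  exact mul_le_mul_left (by exact_mod_cast dyN_succ_ge n z) _

theorem dy_mono_le {n m : ℕ} (h : n ≤ m) (z : ℝ≥0∞) : dy n z ≤ dy m z := by
  induction h with
  | refl => exact le_rfl
  | step _ ih => exact le_trans ih (dy_mono _ _)

theorem dy_le (n : ℕ) (z : ℝ≥0∞) : dy n z ≤ z := by
  by_cases hz : z = ⊤
  · rw [hz]; exact le_top
  · unfold dy dyN
    rw [if_neg hz]
    have hr : 0 ≤ z.toReal := ENNReal.toReal_nonneg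
    have h1 : ((min ⌊z.toReal * 2 ^ n⌋₊ (n * 2 ^ n) : ℕ) : ℝ≥0∞)
        ≤ z * 2 ^ n := by
      calc ((min ⌊z.toReal * 2 ^ n⌋₊ (n * 2 ^ n) : ℕ) : ℝ≥0∞)
          ≤ ((⌊z.toReal * 2 ^ n⌋₊ : ℕ) : ℝ≥0∞) := by
            exact_mod_cast min_le_left _ _
        _ = ENNReal.ofReal (⌊z.toReal * 2 ^ n⌋₊ : ℝ) := (ENNReal.ofReal_natCast _).symm
        _ ≤ ENNReal.ofReal (z.toReal * 2 ^ n) :=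
            ENNReal.ofReal_le_ofReal (Nat.floor_le (by positivity))
        _ = ENNReal.ofReal z.toReal * ENNReal.ofReal ((2:ℝ) ^ n) :=
            ENNReal.ofReal_mul hr
        _ = z * 2 ^ n := by
            rw [ENNReal.ofReal_toReal hz, ENNReal.ofReal_pow (by norm_num)]
            norm_num
    calc ((min ⌊z.toReal * 2 ^ n⌋₊ (n * 2 ^ n) : ℕ) : ℝ≥0∞) * (2 ^ n : ℝ≥0∞)⁻¹
        ≤ z * 2 ^ n * (2 ^ n : ℝ≥0∞)⁻¹ := mul_le_mul_left h1 _
      _ = z := by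
          rw [mul_assoc, ENNReal.mul_inv_cancel (pow2_ne_zero n) (pow2_ne_top n), mul_one]

theorem iSup_dy (z : ℝ≥0∞) : ⨆ n, dy n z = z := by
  by_cases hz : z = ⊤
  · subst hz
    have : ∀ n : ℕ, dy n ⊤ = n := by
      intro n
      unfold dy dyN
      rw [if_pos rfl]
      push_cast
      rw [mul_assoc, ENNReal.mul_inv_cancel (pow2_ne_zero n) (pow2_ne_top n), mul_one]
    calc ⨆ n, dy n ⊤ = ⨆ n : ℕ, (n : ℝ≥0∞) := by exact iSup_congr this
      _ = ⊤ := ENNReal.iSup_natCast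
  · apply le_antisymm (iSup_le fun n => dy_le n z)
    by_contra hc
    push_neg at hc
    obtain ⟨q, hq0, h1, h2⟩ := ENNReal.lt_iff_exists_rat_btwn.mp hc
    have h2' : ENNReal.ofReal q < z := h2
    have hq : (q : ℝ) < z.toReal :=
      (ENNReal.ofReal_lt_iff_lt_toReal (by exact_mod_cast hq0) hz).mp h2'
    set r := z.toReal with hrdef
    have hr : 0 ≤ r := ENNReal.toReal_nonneg
    -- choose a large n
    obtain ⟨n₀, hn₀⟩ := exists_nat_ge r
    obtain ⟨m, hm⟩ := pow_unbounded_of_one_lt (1 / (r - (q:ℝ))) (by norm_num : (1:ℝ) < 2)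
    set n := max m n₀ with hn
    have hpow : (1 / (r - (q:ℝ))) < 2 ^ n :=
      lt_of_lt_of_le hm (pow_le_pow_right₀ (by norm_num) (le_max_left m n₀))
    have hrq : (0:ℝ) < r - q := by linarith
    have hkey : (q : ℝ) * 2 ^ n + 1 < r * 2 ^ n := by
      have h3 : (1:ℝ) < (r - q) * 2 ^ n := by
        rw [div_lt_iff₀ hrq] at hpow
        nlinarith [hpow]
      nlinarith
    have hfloor : (q : ℝ) * 2 ^ n < ⌊r * 2 ^ n⌋₊ := by
      have := Nat.sub_one_lt_floor (r * 2 ^ n)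
      linarith
    have hbound : (q : ℝ) * 2 ^ n < (n : ℝ) * 2 ^ n := by
      have hqn : (q:ℝ) < n := by
        calc (q:ℝ) < r := hq
          _ ≤ n₀ := hn₀
          _ ≤ n := by exact_mod_cast le_max_right m n₀
      have : (0:ℝ) < 2 ^ n := by positivity
      nlinarith
    have hdyN : (q : ℝ) * 2 ^ n < dyN n z := by
      unfold dyN
      rw [if_neg hz]
      rcases min_cases ⌊r * 2 ^ n⌋₊ (n * 2 ^ n) with ⟨hmin, _⟩ | ⟨hmin, _⟩
      · rw [hmin]; exact hfloor
      · rw [hmin]; push_cast; exact hbound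
    -- conclude: ofReal q < dy n z
    have hlt : ENNReal.ofReal q < dy n z := by
      have hq2 : (q : ℝ) < (dyN n z : ℝ) * ((2:ℝ) ^ n)⁻¹ := by
        rw [lt_mul_inv_iff₀ (by positivity : (0:ℝ) < 2 ^ n)]
        exact hdyN
      calc ENNReal.ofReal q < ENNReal.ofReal ((dyN n z : ℝ) * ((2:ℝ) ^ n)⁻¹) :=
            ENNReal.ofReal_lt_ofReal_iff_of_nonneg (by exact_mod_cast hq0) |>.mpr hq2
        _ = dy n z := by
            rw [ENNReal.ofReal_mul (by positivity),
              ENNReal.ofReal_inv_of_pos (by positivity), ENNReal.ofReal_natCast,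
              ENNReal.ofReal_pow (by norm_num)]
            norm_num [dy]
    have : ENNReal.ofReal q ≤ ⨆ k, dy k z := le_trans hlt.le (le_iSup (f := fun k => dy k z) n)
    exact absurd this (not_le.mpr h1)

end
end Fub
namespace Fub
noncomputable section
open Classical
open scoped ENNReal

variable {X : Type}
variable {add : NNLowerReal → NNLowerReal → NNLowerReal}
variable {I : (X → NNLowerReal) → NNLowerReal}

/-- dyadic scalar homogeneity -/
theorem hatI_dy_mul (hadd : AddSpecNN add) (hI : IsLowerIntegral add I)
    (n : ℕ) (c : ℝ≥0∞) (h : X → ℝ≥0∞) :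
    hatI I (fun a => dy n c * h a) = dy n c * hatI I h := by
  unfold dy
  have e : ∀ z : ℝ≥0∞, (dyN n c : ℝ≥0∞) * (2 ^ n : ℝ≥0∞)⁻¹ * z
      = (dyN n c : ℝ≥0∞) * ((2 ^ n : ℝ≥0∞)⁻¹ * z) := fun z => mul_assoc _ _ _
  rw [hatI_congr (fun a => e (h a)), hatI_natmul hadd hI, hatI_invpow hadd hI, e]

/-- full scalar homogeneity -/
theorem hatI_hom (hadd : AddSpecNN add) (hI : IsLowerIntegral add I)
    (c : ℝ≥0∞) (h : X → ℝ≥0∞) :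
    hatI I (fun a => c * h a) = c * hatI I h := by
  have e : ∀ z : ℝ≥0∞, c * z = ⨆ n, dy n c * z := by
    intro z
    rw [← ENNReal.iSup_mul (fun n => dy n c) z, iSup_dy]
  rw [hatI_congr (fun a => e (h a)),
    hatI_iSup hI (fun n a => dy n c * h a) (fun n a => mul_le_mul_left (dy_mono n c) _)]
  calc (⨆ n, hatI I fun a => dy n c * h a) = ⨆ n, dy n c * hatI I h :=
        iSup_congr fun n => hatI_dy_mul hadd hI n c h
    _ = c * hatI I h := by
        rw [← ENNReal.iSup_mul (fun n => dy n c) (hatI I h), iSup_dy]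

/-- classical indicator of a proposition -/
def indP (p : Prop) : ℝ≥0∞ := if p then 1 else 0

theorem indP_mono {p q : Prop} (h : p → q) : indP p ≤ indP q := by
  unfold indP
  by_cases hp : p
  · rw [if_pos hp, if_pos (h hp)]
  · rw [if_neg hp]
    exact zero_le

theorem count_sum (M m : ℕ) :
    (∑ k ∈ Finset.range M, indP (k + 1 ≤ m)) = (min m M : ℕ) := by
  induction M with
  | zero => simp
  | succ M ih =>
      rw [Finset.sum_range_succ, ih]
      unfold indP
      by_cases h : M + 1 ≤ m
      · rw [if_pos h]
        have h1 : min m (M + 1) = M + 1 := min_eq_right h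
        have h2 : min m M = M := min_eq_right (by omega)
        rw [h1, h2]
        push_cast
        ring
      · rw [if_neg h]
        have h1 : min m (M + 1) = m := min_eq_left (by omega)
        have h2 : min m M = m := min_eq_left (by omega)
        rw [h1, h2, add_zero]

theorem dyN_ge_iff (n k : ℕ) (hk : k < n * 2 ^ n) (z : ℝ≥0∞) :
    k + 1 ≤ dyN n z ↔ ((k : ℝ≥0∞) + 1) * (2 ^ n : ℝ≥0∞)⁻¹ ≤ z := by
  by_cases hz : z = ⊤
  · subst hz
    unfold dyN
    rw [if_pos rfl]
    simp only [le_top, iff_true]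
    omega
  · unfold dyN
    rw [if_neg hz]
    have hr : 0 ≤ z.toReal := ENNReal.toReal_nonneg
    have step1 : k + 1 ≤ min ⌊z.toReal * 2 ^ n⌋₊ (n * 2 ^ n) ↔ k + 1 ≤ ⌊z.toReal * 2 ^ n⌋₊ := by
      constructor
      · intro h; exact le_trans h (min_le_left _ _)
      · intro h; exact le_min h (by omega)
    rw [step1, Nat.le_floor_iff (by positivity)]
    have step2 : ((k : ℝ) + 1 ≤ z.toReal * 2 ^ n) ↔ ((k : ℝ) + 1) / 2 ^ n ≤ z.toReal := by
      rw [div_le_iff₀ (by positivity : (0:ℝ) < 2 ^ n)]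
    have cast1 : ((k + 1 : ℕ) : ℝ) = (k : ℝ) + 1 := by push_cast; ring
    rw [cast1, step2]
    -- now convert to ENNReal
    rw [← ENNReal.ofReal_le_iff_le_toReal hz]
    have : ENNReal.ofReal (((k : ℝ) + 1) / 2 ^ n) = ((k : ℝ≥0∞) + 1) * (2 ^ n : ℝ≥0∞)⁻¹ := by
      rw [div_eq_mul_inv, ENNReal.ofReal_mul (by positivity),
        ENNReal.ofReal_inv_of_pos (by positivity : (0:ℝ) < 2 ^ n),
        ENNReal.ofReal_pow (by norm_num)]
      have : ENNReal.ofReal ((k : ℝ) + 1) = (k : ℝ≥0∞) + 1 := by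
        rw [ENNReal.ofReal_add (by positivity) (by norm_num), ENNReal.ofReal_natCast]
        norm_num
      rw [this]
      norm_num
    rw [this]

theorem dy_sum (n : ℕ) (z : ℝ≥0∞) :
    dy n z = ∑ k ∈ Finset.range (n * 2 ^ n),
      (2 ^ n : ℝ≥0∞)⁻¹ * indP (((k : ℝ≥0∞) + 1) * (2 ^ n : ℝ≥0∞)⁻¹ ≤ z) := by
  rw [← Finset.mul_sum]
  have e1 : ∑ k ∈ Finset.range (n * 2 ^ n), indP (((k : ℝ≥0∞) + 1) * (2 ^ n : ℝ≥0∞)⁻¹ ≤ z)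
      = ∑ k ∈ Finset.range (n * 2 ^ n), indP (k + 1 ≤ dyN n z) := by
    apply Finset.sum_congr rfl
    intro k hk
    rw [Finset.mem_range] at hk
    unfold indP
    by_cases hcond : k + 1 ≤ dyN n z
    · rw [if_pos hcond, if_pos ((dyN_ge_iff n k hk z).mp hcond)]
    · rw [if_neg hcond, if_neg (fun hc => hcond ((dyN_ge_iff n k hk z).mpr hc))]
  rw [e1, count_sum]
  have e2 : min (dyN n z) (n * 2 ^ n) = dyN n z := min_eq_left (dyN_le_bound n z)
  rw [e2, dy, mul_comm]

end
end Fub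
namespace Fub
noncomputable section
open Classical
open scoped ENNReal

theorem sierp_ext {s t : Sierp} (h : s.1 ↔ t.1) : s = t := Subtype.ext (propext h)

def mkOpen {X : Type} (p : X → Prop) : X → Sierp := fun x => ⟨p x, InS.all _⟩

/-- indicator of an open -/
def ind (s : Sierp) : ℝ≥0∞ := indP s.1

theorem ind_and (s t : Sierp) : ind (s.and t) = ind s * ind t := by
  unfold ind indP Sierp.and
  by_cases hs : s.1 <;> by_cases ht : t.1 <;> simp [hs, ht]

theorem ind_modular (s t : Sierp) :
    ind (s.or t) + ind (s.and t) = ind s + ind t := by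
  unfold ind indP Sierp.or Sierp.and
  by_cases hs : s.1 <;> by_cases ht : t.1 <;> simp [hs, ht]

variable {A B : Type}
variable {add : NNLowerReal → NNLowerReal → NNLowerReal}
variable {I : (A → NNLowerReal) → NNLowerReal} {J : (B → NNLowerReal) → NNLowerReal}

/-- the two iterated integrals of the indicator of an open of the product -/
def nu1 (I : (A → NNLowerReal) → NNLowerReal) (J : (B → NNLowerReal) → NNLowerReal)
    (W : A × B → Sierp) : ℝ≥0∞ :=
  hatI I (fun a => hatI J (fun b => ind (W (a, b))))

def nu2 (I : (A → NNLowerReal) → NNLowerReal) (J : (B → NNLowerReal) → NNLowerReal)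
    (W : A × B → Sierp) : ℝ≥0∞ :=
  hatI J (fun b => hatI I (fun a => ind (W (a, b))))

theorem nu2_eq (W : A × B → Sierp) :
    nu2 I J W = nu1 J I (fun ba => W (ba.2, ba.1)) := rfl

theorem nu1_congr {W W' : A × B → Sierp} (h : ∀ ab, (W ab).1 ↔ (W' ab).1) :
    nu1 I J W = nu1 I J W' := by
  unfold nu1
  exact hatI_congr fun a => hatI_congr fun b => congrArg ind (sierp_ext (h _))

theorem nu2_congr {W W' : A × B → Sierp} (h : ∀ ab, (W ab).1 ↔ (W' ab).1) :
    nu2 I J W = nu2 I J W' := by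
  rw [nu2_eq, nu2_eq]
  exact nu1_congr fun ba => h _

theorem nu1_mono (hI : IsLowerIntegral add I) (hJ : IsLowerIntegral add J)
    {W W' : A × B → Sierp} (h : ∀ ab, (W ab).1 → (W' ab).1) :
    nu1 I J W ≤ nu1 I J W' :=
  hatI_mono hI fun a => hatI_mono hJ fun b => indP_mono (h _)

theorem nu2_mono (hI : IsLowerIntegral add I) (hJ : IsLowerIntegral add J)
    {W W' : A × B → Sierp} (h : ∀ ab, (W ab).1 → (W' ab).1) :
    nu2 I J W ≤ nu2 I J W' := by
  rw [nu2_eq, nu2_eq]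
  exact nu1_mono hJ hI fun ba => h _

theorem nu1_zero (hI : IsLowerIntegral add I) (hJ : IsLowerIntegral add J)
    {W : A × B → Sierp} (h : ∀ ab, ¬ (W ab).1) : nu1 I J W = 0 := by
  unfold nu1
  have inner : ∀ a, hatI J (fun b => ind (W (a, b))) = 0 := by
    intro a
    have : (fun b => ind (W (a, b))) = fun _ : B => (0:ℝ≥0∞) :=
      funext fun b => if_neg (h (a, b))
    rw [this]
    exact hatI_zero hJ
  have : (fun a => hatI J (fun b => ind (W (a, b)))) = fun _ : A => (0:ℝ≥0∞) :=
    funext inner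
  rw [this]
  exact hatI_zero hI

theorem nu2_zero (hI : IsLowerIntegral add I) (hJ : IsLowerIntegral add J)
    {W : A × B → Sierp} (h : ∀ ab, ¬ (W ab).1) : nu2 I J W = 0 := by
  rw [nu2_eq]
  exact nu1_zero hJ hI fun ba => h _

theorem nu1_modular (hadd : AddSpecNN add) (hI : IsLowerIntegral add I)
    (hJ : IsLowerIntegral add J) (W W' : A × B → Sierp) :
    nu1 I J (fun ab => (W ab).or (W' ab)) + nu1 I J (fun ab => (W ab).and (W' ab))
      = nu1 I J W + nu1 I J W' := by
  unfold nu1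
  rw [← hatI_add hadd hI, ← hatI_add hadd hI]
  apply hatI_congr
  intro a
  rw [← hatI_add hadd hJ, ← hatI_add hadd hJ]
  exact hatI_congr fun b => ind_modular _ _

theorem nu2_modular (hadd : AddSpecNN add) (hI : IsLowerIntegral add I)
    (hJ : IsLowerIntegral add J) (W W' : A × B → Sierp) :
    nu2 I J (fun ab => (W ab).or (W' ab)) + nu2 I J (fun ab => (W ab).and (W' ab))
      = nu2 I J W + nu2 I J W' := by
  rw [nu2_eq, nu2_eq, nu2_eq, nu2_eq]
  exact nu1_modular hadd hJ hI _ _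

theorem nu1_rect (hadd : AddSpecNN add) (hI : IsLowerIntegral add I)
    (hJ : IsLowerIntegral add J) (U : A → Sierp) (V : B → Sierp) :
    nu1 I J (rectangle U V)
      = hatI I (fun a => ind (U a)) * hatI J (fun b => ind (V b)) := by
  unfold nu1 rectangle
  calc hatI I (fun a => hatI J (fun b => ind ((U a).and (V b))))
      = hatI I (fun a => hatI J (fun b => ind (U a) * ind (V b))) :=
        hatI_congr fun a => hatI_congr fun b => ind_and _ _
    _ = hatI I (fun a => ind (U a) * hatI J (fun b => ind (V b))) :=
        hatI_congr fun a => hatI_hom hadd hJ _ _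
    _ = hatI I (fun a => hatI J (fun b => ind (V b)) * ind (U a)) :=
        hatI_congr fun a => mul_comm _ _
    _ = hatI J (fun b => ind (V b)) * hatI I (fun a => ind (U a)) :=
        hatI_hom hadd hI _ _
    _ = _ := mul_comm _ _

theorem nu2_rect (hadd : AddSpecNN add) (hI : IsLowerIntegral add I)
    (hJ : IsLowerIntegral add J) (U : A → Sierp) (V : B → Sierp) :
    nu2 I J (rectangle U V)
      = hatI I (fun a => ind (U a)) * hatI J (fun b => ind (V b)) := by
  rw [nu2_eq]
  have : nu1 J I (fun ba : B × A => rectangle U V (ba.2, ba.1))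
      = nu1 J I (rectangle V U) := by
    apply nu1_congr
    intro ba
    exact and_comm
  rw [this, nu1_rect hadd hJ hI, mul_comm]

/-- equality of the two iterated integrals on finite unions of rectangles -/
theorem nu_eq_FUR (hadd : AddSpecNN add) (hI : IsLowerIntegral add I)
    (hJ : IsLowerIntegral add J) (k : ℕ) :
    ∀ (U : ℕ → A → Sierp) (V : ℕ → B → Sierp),
    nu1 I J (mkOpen fun ab => ∃ i < k, (U i ab.1).1 ∧ (V i ab.2).1)
      = nu2 I J (mkOpen fun ab => ∃ i < k, (U i ab.1).1 ∧ (V i ab.2).1) := by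
  induction k with
  | zero =>
      intro U V
      have h0 : ∀ ab : A × B,
          ¬ (mkOpen (fun ab : A × B => ∃ i < 0, (U i ab.1).1 ∧ (V i ab.2).1) ab).1 := by
        rintro ab ⟨i, hi, _⟩
        omega
      rw [nu1_zero hI hJ h0, nu2_zero hI hJ h0]
  | succ k ih =>
      intro U V
      set Wk : A × B → Sierp := mkOpen fun ab : A × B => ∃ i < k, (U i ab.1).1 ∧ (V i ab.2).1
        with hWkdef
      set R : A × B → Sierp := rectangle (U k) (V k) with hRdef
      have hsplit : ∀ ab : A × B,
          ((mkOpen fun ab : A × B => ∃ i < k + 1, (U i ab.1).1 ∧ (V i ab.2).1) ab).1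
            ↔ ((Wk ab).or (R ab)).1 := by
        intro ab
        show (∃ i < k + 1, (U i ab.1).1 ∧ (V i ab.2).1)
          ↔ (∃ i < k, (U i ab.1).1 ∧ (V i ab.2).1) ∨ ((U k ab.1).1 ∧ (V k ab.2).1)
        constructor
        · rintro ⟨i, hi, h⟩
          rcases Nat.lt_succ_iff_lt_or_eq.mp hi with hi' | rfl
          · exact Or.inl ⟨i, hi', h⟩
          · exact Or.inr h
        · rintro (⟨i, hi, h⟩ | h)
          · exact ⟨i, by omega, h⟩
          · exact ⟨k, by omega, h⟩
      set U' : ℕ → A → Sierp := fun i a => (U i a).and (U k a) with hU'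
      set V' : ℕ → B → Sierp := fun i b => (V i b).and (V k b) with hV'
      have hmeet : ∀ ab : A × B, (((Wk ab).and (R ab)).1) ↔
          ((mkOpen fun ab : A × B => ∃ i < k, (U' i ab.1).1 ∧ (V' i ab.2).1) ab).1 := by
        intro ab
        show ((∃ i < k, (U i ab.1).1 ∧ (V i ab.2).1) ∧ ((U k ab.1).1 ∧ (V k ab.2).1))
          ↔ (∃ i < k, ((U i ab.1).1 ∧ (U k ab.1).1) ∧ ((V i ab.2).1 ∧ (V k ab.2).1))
        constructor
        · rintro ⟨⟨i, hi, h1, h2⟩, h3, h4⟩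
          exact ⟨i, hi, ⟨h1, h3⟩, ⟨h2, h4⟩⟩
        · rintro ⟨i, hi, ⟨h1, h3⟩, h2, h4⟩
          exact ⟨⟨i, hi, h1, h2⟩, h3, h4⟩
      have hWknu : nu1 I J Wk = nu2 I J Wk := ih U V
      have hRnu : nu1 I J R = nu2 I J R := by
        rw [hRdef, nu1_rect hadd hI hJ, nu2_rect hadd hI hJ]
      have hand : nu1 I J (fun ab => (Wk ab).and (R ab))
          = nu2 I J (fun ab => (Wk ab).and (R ab)) := by
        rw [nu1_congr hmeet, nu2_congr hmeet]
        exact ih U' V'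
      rw [nu1_congr hsplit, nu2_congr hsplit]
      by_cases htop : nu1 I J (fun ab => (Wk ab).and (R ab)) = ⊤
      · have h1 : nu1 I J (fun ab => (Wk ab).or (R ab)) = ⊤ :=
          top_unique (htop ▸ nu1_mono hI hJ (fun ab h => Or.inl h.1))
        have h2 : nu2 I J (fun ab => (Wk ab).or (R ab)) = ⊤ :=
          top_unique ((hand ▸ htop) ▸ nu2_mono hI hJ (fun ab h => Or.inl h.1))
        rw [h1, h2]
      · have heq : nu1 I J (fun ab => (Wk ab).or (R ab))
            + nu1 I J (fun ab => (Wk ab).and (R ab))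
            = nu2 I J (fun ab => (Wk ab).or (R ab))
            + nu1 I J (fun ab => (Wk ab).and (R ab)) := by
          rw [nu1_modular hadd hI hJ Wk R, hWknu, hRnu,
            ← nu2_modular hadd hI hJ Wk R, hand]
        exact (ENNReal.add_left_inj htop).mp heq

end
end Fub
namespace Fub
noncomputable section
open Classical
open scoped ENNReal

variable {A B : Type}
variable {add : NNLowerReal → NNLowerReal → NNLowerReal}
variable {I : (A → NNLowerReal) → NNLowerReal} {J : (B → NNLowerReal) → NNLowerReal}

/-- finite union of rectangles (up to logical equivalence) -/
def IsFUR (W : A × B → Sierp) : Prop :=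
  ∃ (k : ℕ) (U : ℕ → A → Sierp) (V : ℕ → B → Sierp),
    ∀ ab, (W ab).1 ↔ ∃ i < k, (U i ab.1).1 ∧ (V i ab.2).1

theorem IsFUR.congr {W W' : A × B → Sierp} (h : ∀ ab, (W ab).1 ↔ (W' ab).1)
    (hW : IsFUR W) : IsFUR W' := by
  obtain ⟨k, U, V, hk⟩ := hW
  exact ⟨k, U, V, fun ab => (h ab).symm.trans (hk ab)⟩

theorem IsFUR.rect (U : A → Sierp) (V : B → Sierp) : IsFUR (rectangle U V) := by
  refine ⟨1, fun _ => U, fun _ => V, fun ab => ?_⟩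
  constructor
  · intro h
    exact ⟨0, by omega, h⟩
  · rintro ⟨i, _, h⟩
    exact h

theorem IsFUR.or {W W' : A × B → Sierp} (hW : IsFUR W) (hW' : IsFUR W') :
    IsFUR (fun ab => (W ab).or (W' ab)) := by
  obtain ⟨k, U, V, hk⟩ := hW
  obtain ⟨k', U', V', hk'⟩ := hW'
  refine ⟨k + k', fun i => if i < k then U i else U' (i - k),
    fun i => if i < k then V i else V' (i - k), fun ab => ?_⟩
  show (W ab).1 ∨ (W' ab).1 ↔ _
  constructor
  · rintro (h | h)
    · obtain ⟨i, hi, hu, hv⟩ := (hk ab).mp h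
      refine ⟨i, by omega, ?_, ?_⟩
      · simpa only [if_pos hi] using hu
      · simpa only [if_pos hi] using hv
    · obtain ⟨i, hi, hu, hv⟩ := (hk' ab).mp h
      refine ⟨k + i, by omega, ?_, ?_⟩
      · simpa only [if_neg (by omega : ¬ k + i < k), Nat.add_sub_cancel_left] using hu
      · simpa only [if_neg (by omega : ¬ k + i < k), Nat.add_sub_cancel_left] using hv
  · rintro ⟨i, hi, hu, hv⟩
    by_cases hik : i < k
    · simp only [if_pos hik] at hu hv
      exact Or.inl ((hk ab).mpr ⟨i, hik, hu, hv⟩)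
    · simp only [if_neg hik] at hu hv
      exact Or.inr ((hk' ab).mpr ⟨i - k, by omega, hu, hv⟩)

theorem nu_eq_of_FUR (hadd : AddSpecNN add) (hI : IsLowerIntegral add I)
    (hJ : IsLowerIntegral add J) {W : A × B → Sierp} (h : IsFUR W) :
    nu1 I J W = nu2 I J W := by
  obtain ⟨k, U, V, hk⟩ := h
  have hk' : ∀ ab, (W ab).1
      ↔ ((mkOpen fun ab : A × B => ∃ i < k, (U i ab.1).1 ∧ (V i ab.2).1) ab).1 := hk
  rw [nu1_congr hk', nu2_congr hk']
  exact nu_eq_FUR hadd hI hJ k U V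

/-- every open of the product is an increasing countable union of FURs -/
def Approx (W : A × B → Sierp) : Prop :=
  ∃ d : ℕ → (A × B → Sierp), (∀ n, IsFUR (d n)) ∧
    (∀ n ab, (d n ab).1 → (d (n + 1) ab).1) ∧
    ∀ ab, (W ab).1 ↔ ∃ n, (d n ab).1

theorem approx_all
    (hprod : ∀ (W : A × B → Sierp) (C : Set (A × B → Sierp)),
      (∀ (U : A → Sierp) (V : B → Sierp), rectangle U V ∈ C) →
        (∀ c : ℕ → (A × B → Sierp), (∀ n, c n ∈ C) →
          (fun ab => Sierp.joinSeq (fun n => c n ab)) ∈ C) →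
          W ∈ C)
    (W : A × B → Sierp) : Approx W := by
  refine hprod W {W | Approx W} ?_ ?_
  · intro U V
    exact ⟨fun _ => rectangle U V, fun _ => IsFUR.rect U V, fun n ab h => h,
      fun ab => ⟨fun h => ⟨0, h⟩, fun ⟨n, h⟩ => h⟩⟩
  · intro c hc
    choose d hFUR hmono hiff using hc
    have hmono' : ∀ n {m m'}, m ≤ m' → ∀ ab, (d n m ab).1 → (d n m' ab).1 := by
      intro n m m' hm
      induction hm with
      | refl => exact fun ab h => h
      | step _ ih => exact fun ab h => hmono _ _ ab (ih ab h)
    have hbnd : ∀ j m : ℕ, IsFUR (mkOpen fun ab : A × B => ∃ n ≤ j, (d n m ab).1) := by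
      intro j m
      induction j with
      | zero =>
          apply (hFUR 0 m).congr
          intro ab
          constructor
          · intro h; exact ⟨0, le_rfl, h⟩
          · rintro ⟨n, hn, h⟩
            have : n = 0 := by omega
            subst this; exact h
      | succ j ihj =>
          apply (ihj.or (hFUR (j + 1) m)).congr
          intro ab
          show ((∃ n ≤ j, (d n m ab).1) ∨ (d (j + 1) m ab).1) ↔ ∃ n ≤ j + 1, (d n m ab).1
          constructor
          · rintro (⟨n, hn, h⟩ | h)
            · exact ⟨n, by omega, h⟩
            · exact ⟨j + 1, le_rfl, h⟩
          · rintro ⟨n, hn, h⟩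
            rcases Nat.lt_succ_iff_lt_or_eq.mp (Nat.lt_succ_of_le hn) with h' | rfl
            · exact Or.inl ⟨n, by omega, h⟩
            · exact Or.inr h
    refine ⟨fun m => mkOpen fun ab : A × B => ∃ n ≤ m, (d n m ab).1,
      fun m => hbnd m m, ?_, ?_⟩
    · rintro m ab ⟨n, hn, h⟩
      exact ⟨n, by omega, hmono' n (Nat.le_succ m) ab h⟩
    · intro ab
      show (∃ n, (c n ab).1) ↔ ∃ m, ∃ n ≤ m, (d n m ab).1
      constructor
      · rintro ⟨n, h⟩
        obtain ⟨m, hm⟩ := (hiff n ab).mp h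
        exact ⟨max n m, n, le_max_left _ _, hmono' n (le_max_right n m) ab hm⟩
      · rintro ⟨m, n, _, h⟩
        exact ⟨n, (hiff n ab).mpr ⟨m, h⟩⟩

theorem indP_iSup {p : Prop} {q : ℕ → Prop} (h : p ↔ ∃ n, q n) :
    indP p = ⨆ n, indP (q n) := by
  by_cases hp : p
  · obtain ⟨n, hn⟩ := h.mp hp
    apply le_antisymm
    · calc indP p = indP (q n) := by rw [indP, indP, if_pos hp, if_pos hn]
        _ ≤ ⨆ m, indP (q m) := le_iSup (f := fun m => indP (q m)) n
    · exact iSup_le fun m => indP_mono fun _ => hp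
  · have hq : ∀ n, ¬ q n := fun n hn => hp (h.mpr ⟨n, hn⟩)
    rw [indP, if_neg hp]
    exact (le_antisymm (iSup_le fun n => le_of_eq (by rw [indP, if_neg (hq n)]))
      (zero_le)).symm

theorem nu1_sup (hI : IsLowerIntegral add I) (hJ : IsLowerIntegral add J)
    {W : A × B → Sierp} {e : ℕ → A × B → Sierp}
    (hmono : ∀ m ab, (e m ab).1 → (e (m + 1) ab).1)
    (hiff : ∀ ab, (W ab).1 ↔ ∃ m, (e m ab).1) :
    nu1 I J W = ⨆ m, nu1 I J (e m) := by
  unfold nu1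
  calc hatI I (fun a => hatI J fun b => ind (W (a, b)))
      = hatI I (fun a => hatI J fun b => ⨆ m, ind (e m (a, b))) :=
        hatI_congr fun a => hatI_congr fun b => indP_iSup (hiff _)
    _ = hatI I (fun a => ⨆ m, hatI J fun b => ind (e m (a, b))) :=
        hatI_congr fun a => hatI_iSup hJ (fun m b => ind (e m (a, b)))
          (fun m b => indP_mono (hmono m _))
    _ = ⨆ m, hatI I (fun a => hatI J fun b => ind (e m (a, b))) :=
        hatI_iSup hI _ (fun m a => hatI_mono hJ fun b => indP_mono (hmono m _))

theorem nu2_sup (hI : IsLowerIntegral add I) (hJ : IsLowerIntegral add J)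
    {W : A × B → Sierp} {e : ℕ → A × B → Sierp}
    (hmono : ∀ m ab, (e m ab).1 → (e (m + 1) ab).1)
    (hiff : ∀ ab, (W ab).1 ↔ ∃ m, (e m ab).1) :
    nu2 I J W = ⨆ m, nu2 I J (e m) := by
  rw [nu2_eq]
  have := nu1_sup (I := J) (J := I) hJ hI
    (W := fun ba : B × A => W (ba.2, ba.1)) (e := fun m (ba : B × A) => e m (ba.2, ba.1))
    (fun m ba => hmono m _) (fun ba => hiff _)
  rw [this]
  rfl

theorem nu_eq_open (hadd : AddSpecNN add) (hI : IsLowerIntegral add I)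
    (hJ : IsLowerIntegral add J)
    (hprod : ∀ (W : A × B → Sierp) (C : Set (A × B → Sierp)),
      (∀ (U : A → Sierp) (V : B → Sierp), rectangle U V ∈ C) →
        (∀ c : ℕ → (A × B → Sierp), (∀ n, c n ∈ C) →
          (fun ab => Sierp.joinSeq (fun n => c n ab)) ∈ C) →
          W ∈ C)
    (W : A × B → Sierp) : nu1 I J W = nu2 I J W := by
  obtain ⟨d, hFUR, hmono, hiff⟩ := approx_all hprod W
  rw [nu1_sup hI hJ hmono hiff, nu2_sup hI hJ hmono hiff]
  exact iSup_congr fun m => nu_eq_of_FUR hadd hI hJ (hFUR m)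

end
end Fub
/-- Fubini: if `𝓘`, `𝓙` are lower integrals on `A`, `B`, and `A × B`
carries the product topology — i.e. `𝒪(A × B)` is the least collection of opens
containing all rectangles and closed under enumerable joins — then the two iterated
integrals agree for every `f : A × B → ℝ_l⁺`. -/
theorem fubini {A B : Type}
    (add : NNLowerReal → NNLowerReal → NNLowerReal) (hadd : AddSpecNN add)
    (hprod : ∀ (W : A × B → Sierp) (C : Set (A × B → Sierp)),
      (∀ (U : A → Sierp) (V : B → Sierp), rectangle U V ∈ C) →
        (∀ c : ℕ → (A × B → Sierp), (∀ n, c n ∈ C) →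
          (fun ab => Sierp.joinSeq (fun n => c n ab)) ∈ C) →
          W ∈ C)
    (I : (A → NNLowerReal) → NNLowerReal) (J : (B → NNLowerReal) → NNLowerReal)
    (hI : IsLowerIntegral add I) (hJ : IsLowerIntegral add J) :
    ∀ f : A × B → NNLowerReal,
      I (fun a => J (fun b => f (a, b))) = J (fun b => I (fun a => f (a, b))) := by
  intro f
  apply Fub.toE_inj
  set g : A × B → ENNReal := fun ab => Fub.toE (f ab) with hg
  -- rewrite both sides through the transfer
  have hL : Fub.hatI I (fun a => Fub.hatI J fun b => g (a, b))
      = Fub.toE (I fun a => J fun b => f (a, b)) := by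
    show Fub.toE (I fun a => Fub.ofE (Fub.hatI J fun b => g (a, b))) = _
    have e : (fun a => Fub.ofE (Fub.hatI J fun b => g (a, b)))
        = fun a => J fun b => f (a, b) := by
      funext a
      show Fub.ofE (Fub.toE (J fun b => Fub.ofE (g (a, b)))) = _
      have e2 : (fun b => Fub.ofE (g (a, b))) = fun b => f (a, b) :=
        funext fun b => Fub.ofE_toE _
      rw [e2, Fub.ofE_toE]
    rw [e]
  have hR : Fub.hatI J (fun b => Fub.hatI I fun a => g (a, b))
      = Fub.toE (J fun b => I fun a => f (a, b)) := by
    show Fub.toE (J fun b => Fub.ofE (Fub.hatI I fun a => g (a, b))) = _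
    have e : (fun b => Fub.ofE (Fub.hatI I fun a => g (a, b)))
        = fun b => I fun a => f (a, b) := by
      funext b
      show Fub.ofE (Fub.toE (I fun a => Fub.ofE (g (a, b)))) = _
      have e2 : (fun a => Fub.ofE (g (a, b))) = fun a => f (a, b) :=
        funext fun a => Fub.ofE_toE _
      rw [e2, Fub.ofE_toE]
    rw [e]
  rw [← hL, ← hR]
  -- the opens appearing in the dyadic decomposition of g
  set Wo : ℕ → ℕ → A × B → Sierp :=
    fun n k => Fub.mkOpen fun ab =>
      ((k : ENNReal) + 1) * (2 ^ n : ENNReal)⁻¹ ≤ g ab with hWo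
  have hnu : ∀ n k, Fub.nu1 I J (Wo n k) = Fub.nu2 I J (Wo n k) :=
    fun n k => Fub.nu_eq_open hadd hI hJ hprod (Wo n k)
  -- reduce each side to the dyadic sums
  have key1 : Fub.hatI I (fun a => Fub.hatI J fun b => g (a, b))
      = ⨆ n, ∑ k ∈ Finset.range (n * 2 ^ n),
          (2 ^ n : ENNReal)⁻¹ * Fub.nu1 I J (Wo n k) := by
    calc Fub.hatI I (fun a => Fub.hatI J fun b => g (a, b))
        = Fub.hatI I (fun a => Fub.hatI J fun b => ⨆ n, Fub.dy n (g (a, b))) :=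
          Fub.hatI_congr fun a => Fub.hatI_congr fun b => (Fub.iSup_dy _).symm
      _ = Fub.hatI I (fun a => ⨆ n, Fub.hatI J fun b => Fub.dy n (g (a, b))) :=
          Fub.hatI_congr fun a =>
            Fub.hatI_iSup hJ (fun n b => Fub.dy n (g (a, b))) (fun n b => Fub.dy_mono n _)
      _ = ⨆ n, Fub.hatI I (fun a => Fub.hatI J fun b => Fub.dy n (g (a, b))) :=
          Fub.hatI_iSup hI (fun n a => Fub.hatI J fun b => Fub.dy n (g (a, b)))
            (fun n a => Fub.hatI_mono hJ fun b => Fub.dy_mono n _)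
      _ = ⨆ n, ∑ k ∈ Finset.range (n * 2 ^ n),
            (2 ^ n : ENNReal)⁻¹ * Fub.nu1 I J (Wo n k) := by
          refine iSup_congr fun n => ?_
          calc Fub.hatI I (fun a => Fub.hatI J fun b => Fub.dy n (g (a, b)))
              = Fub.hatI I (fun a => Fub.hatI J fun b =>
                  ∑ k ∈ Finset.range (n * 2 ^ n),
                    (2 ^ n : ENNReal)⁻¹ * Fub.ind (Wo n k (a, b))) :=
                Fub.hatI_congr fun a => Fub.hatI_congr fun b => Fub.dy_sum n _
            _ = Fub.hatI I (fun a => ∑ k ∈ Finset.range (n * 2 ^ n),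
                  Fub.hatI J fun b => (2 ^ n : ENNReal)⁻¹ * Fub.ind (Wo n k (a, b))) :=
                Fub.hatI_congr fun a => Fub.hatI_finsum hadd hJ _ _
            _ = ∑ k ∈ Finset.range (n * 2 ^ n),
                  Fub.hatI I (fun a => Fub.hatI J fun b =>
                    (2 ^ n : ENNReal)⁻¹ * Fub.ind (Wo n k (a, b))) :=
                Fub.hatI_finsum hadd hI _ _
            _ = ∑ k ∈ Finset.range (n * 2 ^ n),
                  (2 ^ n : ENNReal)⁻¹ * Fub.nu1 I J (Wo n k) := by
                refine Finset.sum_congr rfl fun k _ => ?_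
                have e1 : (fun a => Fub.hatI J fun b =>
                    (2 ^ n : ENNReal)⁻¹ * Fub.ind (Wo n k (a, b)))
                    = fun a => (2 ^ n : ENNReal)⁻¹
                        * Fub.hatI J (fun b => Fub.ind (Wo n k (a, b))) :=
                  funext fun a => Fub.hatI_hom hadd hJ _ _
                rw [e1, Fub.hatI_hom hadd hI]
                rfl
  have key2 : Fub.hatI J (fun b => Fub.hatI I fun a => g (a, b))
      = ⨆ n, ∑ k ∈ Finset.range (n * 2 ^ n),
          (2 ^ n : ENNReal)⁻¹ * Fub.nu2 I J (Wo n k) := by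
    calc Fub.hatI J (fun b => Fub.hatI I fun a => g (a, b))
        = Fub.hatI J (fun b => Fub.hatI I fun a => ⨆ n, Fub.dy n (g (a, b))) :=
          Fub.hatI_congr fun b => Fub.hatI_congr fun a => (Fub.iSup_dy _).symm
      _ = Fub.hatI J (fun b => ⨆ n, Fub.hatI I fun a => Fub.dy n (g (a, b))) :=
          Fub.hatI_congr fun b =>
            Fub.hatI_iSup hI (fun n a => Fub.dy n (g (a, b))) (fun n a => Fub.dy_mono n _)
      _ = ⨆ n, Fub.hatI J (fun b => Fub.hatI I fun a => Fub.dy n (g (a, b))) :=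
          Fub.hatI_iSup hJ (fun n b => Fub.hatI I fun a => Fub.dy n (g (a, b)))
            (fun n b => Fub.hatI_mono hI fun a => Fub.dy_mono n _)
      _ = ⨆ n, ∑ k ∈ Finset.range (n * 2 ^ n),
            (2 ^ n : ENNReal)⁻¹ * Fub.nu2 I J (Wo n k) := by
          refine iSup_congr fun n => ?_
          calc Fub.hatI J (fun b => Fub.hatI I fun a => Fub.dy n (g (a, b)))
              = Fub.hatI J (fun b => Fub.hatI I fun a =>
                  ∑ k ∈ Finset.range (n * 2 ^ n),
                    (2 ^ n : ENNReal)⁻¹ * Fub.ind (Wo n k (a, b))) :=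
                Fub.hatI_congr fun b => Fub.hatI_congr fun a => Fub.dy_sum n _
            _ = Fub.hatI J (fun b => ∑ k ∈ Finset.range (n * 2 ^ n),
                  Fub.hatI I fun a => (2 ^ n : ENNReal)⁻¹ * Fub.ind (Wo n k (a, b))) :=
                Fub.hatI_congr fun b => Fub.hatI_finsum hadd hI _ _
            _ = ∑ k ∈ Finset.range (n * 2 ^ n),
                  Fub.hatI J (fun b => Fub.hatI I fun a =>
                    (2 ^ n : ENNReal)⁻¹ * Fub.ind (Wo n k (a, b))) :=
                Fub.hatI_finsum hadd hJ _ _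
            _ = ∑ k ∈ Finset.range (n * 2 ^ n),
                  (2 ^ n : ENNReal)⁻¹ * Fub.nu2 I J (Wo n k) := by
                refine Finset.sum_congr rfl fun k _ => ?_
                have e1 : (fun b => Fub.hatI I fun a =>
                    (2 ^ n : ENNReal)⁻¹ * Fub.ind (Wo n k (a, b)))
                    = fun b => (2 ^ n : ENNReal)⁻¹
                        * Fub.hatI I (fun a => Fub.ind (Wo n k (a, b))) :=
                  funext fun b => Fub.hatI_hom hadd hI _ _
                rw [e1, Fub.hatI_hom hadd hJ]
                rfl
  rw [key1, key2]
  exact iSup_congr fun n => Finset.sum_congr rfl fun k _ => by rw [hnu n k]
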